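/- Let G be a class 2 graph with a critical edge e = rs and let φ be a proper Δ-edge-coloring of G−e. If F is a multifan at r with respect to e and φ, then V(F) is elementary with respect to φ: the missing color sets of distinct vertices in F are pairwise disjoint. -/

import Mathlib

/-- A proper `k`-edge-coloring: colors are in `[k] = {0, …, k-1}` and edges sharing a
vertex receive distinct colors. -/
def IsProperEdgeColoring {V : Type*} (G : SimpleGraph V) (φ : Sym2 V → ℕ) (k : ℕ) : Prop :=
  (∀ e ∈ G.edgeSet, φ e < k) ∧
  ∀ e ∈ G.edgeSet, ∀ f ∈ G.edgeSet, e ≠ f → (∃ v, v ∈ e ∧ v ∈ f) → φ e ≠ φ f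

/-- The chromatic index `χ'(G)`: least `k` admitting a proper `k`-edge-coloring. -/
noncomputable def chromaticIndex {V : Type*} (G : SimpleGraph V) : ℕ :=
  sInf {k | ∃ φ, IsProperEdgeColoring G φ k}

/-- The set of colors of `[Δ]` missing at `v` under `φ` (w.r.t. the graph `G`). -/
def missing {V : Type*} (G : SimpleGraph V) (φ : Sym2 V → ℕ) (Δ : ℕ) (v : V) : Set ℕ :=
  {c | c < Δ ∧ ∀ e ∈ G.edgeSet, v ∈ e → φ e ≠ c}

/-- `s 0, s 1, …, s p` (with the edges `e_i = r s_i`, `e_0 = r s_0` being the uncolored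
edge) forms a multifan at `r` w.r.t. the edge `r s_0` and the coloring `φ` of
`G - r s_0` with colors in `[Δ]`: vertices are distinct, different from `r`, adjacent
to `r`, and for `i ≥ 1` the color `φ(r s_i)` is missing at some earlier `s_j`. -/
def IsMultifan {V : Type*} (G : SimpleGraph V) (φ : Sym2 V → ℕ) (Δ : ℕ)
    (r : V) {p : ℕ} (s : Fin (p + 1) → V) : Prop :=
  Function.Injective s ∧ (∀ i, s i ≠ r) ∧ (∀ i, G.Adj r (s i)) ∧
  ∀ i : Fin (p + 1), i ≠ 0 →
    ∃ j : Fin (p + 1), j < i ∧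
      φ s(r, s i) ∈ missing (G.deleteEdges {s(r, s 0)}) φ Δ (s j)

/-- A multifan at `r` is maximal if it cannot be extended by a further neighbor `t` of
`r` whose edge `r t` is colored with a color missing at some vertex of the fan. -/
def IsMaximalMultifan {V : Type*} (G : SimpleGraph V) (φ : Sym2 V → ℕ) (Δ : ℕ)
    (r : V) {p : ℕ} (s : Fin (p + 1) → V) : Prop :=
  IsMultifan G φ Δ r s ∧
  ∀ t : V, G.Adj r t → t ∉ ({r} ∪ Set.range s : Set V) →
    ∀ j : Fin (p + 1), φ s(r, t) ∉ missing (G.deleteEdges {s(r, s 0)}) φ Δ (s j)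


set_option linter.unusedSectionVars false
section Aux
variable {V : Type*} [Fintype V] [DecidableEq V]

lemma adj_of_mem' {G : SimpleGraph V} {g : Sym2 V} (hg : g ∈ G.edgeSet) {v : V} (hv : v ∈ g) :
    ∃ w, G.Adj v w ∧ g = s(v, w) := by
  induction g using Sym2.ind with
  | _ a b =>
    rw [Sym2.mem_iff] at hv
    rcases hv with rfl | rfl
    · exact ⟨b, hg, rfl⟩
    · rw [SimpleGraph.mem_edgeSet] at hg
      exact ⟨a, hg.symm, Sym2.eq_swap.symm⟩

lemma lemA0 {G : SimpleGraph V} [DecidableRel G.Adj] {r v : V}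
    (hclass2 : chromaticIndex G = G.maxDegree + 1)
    (hadj : G.Adj r v)
    {ψ : Sym2 V → ℕ} (hψ : IsProperEdgeColoring (G.deleteEdges {s(r, v)}) ψ G.maxDegree)
    {γ : ℕ} (hγr : γ ∈ missing (G.deleteEdges {s(r, v)}) ψ G.maxDegree r)
    (hγv : γ ∈ missing (G.deleteEdges {s(r, v)}) ψ G.maxDegree v) : False := by
  set Δ := G.maxDegree with hΔ
  set e₀ : Sym2 V := s(r, v) with he₀
  have hmem : ∀ {f : Sym2 V}, f ∈ G.edgeSet → f ≠ e₀ →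
      f ∈ (G.deleteEdges {e₀}).edgeSet := by
    intro f hf hne
    rw [SimpleGraph.edgeSet_deleteEdges]
    exact ⟨hf, hne⟩
  have hprop : IsProperEdgeColoring G (fun f => if f = e₀ then γ else ψ f) Δ := by
    constructor
    · intro f hf
      by_cases h : f = e₀
      · simpa [h] using hγr.1
      · simpa [h] using hψ.1 f (hmem hf h)
    · rintro f hf g hg hfg ⟨x, hxf, hxg⟩
      by_cases h1 : f = e₀
      · have hg' : g ≠ e₀ := by rw [h1] at hfg; exact fun hh => hfg hh.symm
        simp only [h1, if_pos rfl, if_neg hg']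
        subst h1
        rw [he₀, Sym2.mem_iff] at hxf
        have hx : x = r ∨ x = v := hxf
        rcases hx with rfl | rfl
        · exact fun hh => hγr.2 g (hmem hg hg') hxg hh.symm
        · exact fun hh => hγv.2 g (hmem hg hg') hxg hh.symm
      · by_cases h2 : g = e₀
        · simp only [h1, if_neg, h2, if_pos rfl]
          subst h2
          rw [he₀, Sym2.mem_iff] at hxg
          have hx : x = r ∨ x = v := hxg
          rcases hx with rfl | rfl
          · exact hγr.2 f (hmem hf h1) hxf
          · exact hγv.2 f (hmem hf h1) hxf
        · simp only [h1, h2, if_neg]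
          exact hψ.2 f (hmem hf h1) g (hmem hg h2) hfg ⟨x, hxf, hxg⟩
  have hle : chromaticIndex G ≤ Δ := Nat.sInf_le ⟨_, hprop⟩
  omega

end Aux

section Aux2
variable {V : Type*} [Fintype V] [DecidableEq V]

lemma edge_ne_e0 {G : SimpleGraph V} {r : V} {q : ℕ} {s : Fin (q + 1) → V}
    (hinj : Function.Injective s) (hne : ∀ i, s i ≠ r) (hadj : ∀ i, G.Adj r (s i))
    {k : Fin (q + 1)} (hk : k ≠ 0) :
    s(r, s k) ∈ (G.deleteEdges {s(r, s 0)}).edgeSet := by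
  rw [SimpleGraph.edgeSet_deleteEdges]
  refine ⟨hadj k, ?_⟩
  simp only [Set.mem_singleton_iff, Sym2.eq, Sym2.rel_iff', Prod.mk.injEq, Prod.swap_prod_mk]
  rintro (⟨-, h⟩ | ⟨h1, h2⟩)
  · exact hk (hinj h)
  · exact hne k h2

lemma edge_inj {r : V} {q : ℕ} {s : Fin (q + 1) → V}
    (hinj : Function.Injective s) (hne : ∀ i, s i ≠ r)
    {k i : Fin (q + 1)} (h : s(r, s k) = s(r, s i)) : k = i := by
  rcases Sym2.eq_iff.mp h with ⟨-, h⟩ | ⟨h1, h2⟩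
  · exact hinj h
  · exact absurd h2 (hne k)

lemma lemA {G : SimpleGraph V} [DecidableRel G.Adj] {r : V} {q : ℕ} {s : Fin (q + 1) → V}
    (hclass2 : chromaticIndex G = G.maxDegree + 1)
    (hinj : Function.Injective s) (hne : ∀ i, s i ≠ r) (hadj : ∀ i, G.Adj r (s i)) :
    ∀ (n : ℕ) (i : Fin (q + 1)), i.val ≤ n →
      ∀ (ψ : Sym2 V → ℕ), IsProperEdgeColoring (G.deleteEdges {s(r, s 0)}) ψ G.maxDegree →
      (∀ k : Fin (q + 1), k ≤ i → k ≠ 0 → ∃ w, w < k ∧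
          ψ s(r, s k) ∈ missing (G.deleteEdges {s(r, s 0)}) ψ G.maxDegree (s w)) →
      ∀ γ, γ ∈ missing (G.deleteEdges {s(r, s 0)}) ψ G.maxDegree r →
      γ ∈ missing (G.deleteEdges {s(r, s 0)}) ψ G.maxDegree (s i) → False := by
  intro n
  induction n with
  | zero =>
    intro i hi ψ hψ hfan γ hγr hγi
    have h0 : i = 0 := by
      apply Fin.ext; rw [Fin.val_zero]; omega
    subst h0
    exact lemA0 hclass2 (hadj 0) hψ hγr hγi
  | succ n ih =>
    intro i hi ψ hψ hfan γ hγr hγi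
    by_cases h0 : i = 0
    · subst h0
      exact lemA0 hclass2 (hadj 0) hψ hγr hγi
    · obtain ⟨w, hwlt, hwm⟩ := hfan i le_rfl h0
      set Δ := G.maxDegree with hΔ
      set G' := G.deleteEdges {s(r, s 0)} with hG'
      set c : ℕ := ψ s(r, s i) with hc
      set ψ' : Sym2 V → ℕ := fun f => if f = s(r, s i) then γ else ψ f with hψ'def
      have hei : s(r, s i) ∈ G'.edgeSet := edge_ne_e0 hinj hne hadj h0
      have hsw_not : s w ∉ s(r, s i) := by
        rw [Sym2.mem_iff]
        rintro (h | h)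
        · exact hne w h
        · exact absurd (hinj h) (by intro hh; rw [hh] at hwlt; exact lt_irrefl _ hwlt)
      -- ψ' is proper
      have hψ'prop : IsProperEdgeColoring G' ψ' Δ := by
        constructor
        · intro f hf
          by_cases h : f = s(r, s i)
          · simpa [hψ'def, h] using hγr.1
          · simpa [hψ'def, h] using hψ.1 f hf
        · rintro f hf g hg hfg ⟨x, hxf, hxg⟩
          by_cases h1 : f = s(r, s i)
          · have h2 : g ≠ s(r, s i) := fun hh => hfg (h1.trans hh.symm)
            simp only [hψ'def, h1, if_pos rfl, if_neg h2]
            subst h1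
            rw [Sym2.mem_iff] at hxf
            rcases hxf with rfl | rfl
            · exact fun hh => hγr.2 g hg hxg hh.symm
            · exact fun hh => hγi.2 g hg hxg hh.symm
          · by_cases h2 : g = s(r, s i)
            · simp only [hψ'def, if_neg h1, h2, if_pos rfl]
              subst h2
              rw [Sym2.mem_iff] at hxg
              rcases hxg with rfl | rfl
              · exact hγr.2 f hf hxf
              · exact hγi.2 f hf hxf
            · simp only [hψ'def, if_neg h1, if_neg h2]
              exact hψ.2 f hf g hg hfg ⟨x, hxf, hxg⟩
      -- fan condition up to w for ψ'
      have hfan' : ∀ k : Fin (q + 1), k ≤ w → k ≠ 0 → ∃ w', w' < k ∧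
          ψ' s(r, s k) ∈ missing G' ψ' Δ (s w') := by
        intro k hk hk0
        obtain ⟨w', hw'lt, hw'm⟩ := hfan k (le_of_lt (lt_of_le_of_lt hk hwlt)) hk0
        have hknei : s(r, s k) ≠ s(r, s i) := by
          intro hh
          have := edge_inj hinj hne hh
          subst this
          exact absurd (lt_of_le_of_lt hk hwlt) (lt_irrefl _)
        refine ⟨w', hw'lt, ?_⟩
        have hval : ψ' s(r, s k) = ψ s(r, s k) := by simp [hψ'def, hknei]
        rw [hval]
        refine ⟨hw'm.1, ?_⟩
        intro g hg hxg
        by_cases hge : g = s(r, s i)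
        · exfalso
          subst hge
          rw [Sym2.mem_iff] at hxg
          rcases hxg with h | h
          · exact hne w' h
          · have := hinj h
            subst this
            exact absurd (lt_of_lt_of_le (lt_of_lt_of_le hw'lt hk) (le_of_lt hwlt)) (lt_irrefl _)
        · simpa [hψ'def, hge] using hw'm.2 g hg hxg
      -- c missing at r under ψ'
      have hcr : c ∈ missing G' ψ' Δ r := by
        refine ⟨hψ.1 _ hei, ?_⟩
        intro g hg hrg
        by_cases hge : g = s(r, s i)
        · simp only [hψ'def, hge, if_pos rfl]
          intro hh
          exact hγr.2 _ hei (Sym2.mem_mk_left r (s i)) (hc ▸ hh.symm ▸ rfl)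
        · simp only [hψ'def, if_neg hge]
          exact hψ.2 g hg _ hei hge ⟨r, hrg, Sym2.mem_mk_left r (s i)⟩
      -- c missing at s w under ψ'
      have hcw : c ∈ missing G' ψ' Δ (s w) := by
        refine ⟨hψ.1 _ hei, ?_⟩
        intro g hg hxg
        by_cases hge : g = s(r, s i)
        · exact absurd (hge ▸ hxg) hsw_not
        · simpa [hψ'def, hge] using hwm.2 g hg hxg
      have hwn : w.val ≤ n := by
        have := hwlt
        rw [Fin.lt_def] at this
        omega
      exact ih w hwn ψ' hψ'prop hfan' c hcr hcw

lemma lemA' {G : SimpleGraph V} [DecidableRel G.Adj] {r : V} {q : ℕ} {s : Fin (q + 1) → V}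
    (hclass2 : chromaticIndex G = G.maxDegree + 1)
    {ψ : Sym2 V → ℕ} (hψ : IsProperEdgeColoring (G.deleteEdges {s(r, s 0)}) ψ G.maxDegree)
    (hF : IsMultifan G ψ G.maxDegree r s) (i : Fin (q + 1)) {γ : ℕ}
    (hγr : γ ∈ missing (G.deleteEdges {s(r, s 0)}) ψ G.maxDegree r)
    (hγi : γ ∈ missing (G.deleteEdges {s(r, s 0)}) ψ G.maxDegree (s i)) : False := by
  obtain ⟨hinj, hne, hadj, hwit⟩ := hF
  refine lemA hclass2 hinj hne hadj i.val i le_rfl ψ hψ ?_ γ hγr hγi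
  intro k _ hk0
  exact hwit k hk0

lemma exists_missing_r {G : SimpleGraph V} [DecidableRel G.Adj] {r v : V} (hadj : G.Adj r v)
    {ψ : Sym2 V → ℕ}
    (hψ : IsProperEdgeColoring (G.deleteEdges {s(r, v)}) ψ G.maxDegree) :
    ∃ β, β ∈ missing (G.deleteEdges {s(r, v)}) ψ G.maxDegree r := by
  classical
  set Δ := G.maxDegree with hΔ
  set G' := G.deleteEdges {s(r, v)} with hG'
  haveI : DecidableRel G'.Adj := Classical.decRel _
  set N := G'.neighborFinset r with hN
  set C := N.image (fun y => ψ s(r, y)) with hC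
  have hsub : N ⊆ (G.neighborFinset r).erase v := by
    intro y hy
    rw [hN, SimpleGraph.mem_neighborFinset, hG', SimpleGraph.deleteEdges_adj] at hy
    rw [Finset.mem_erase, SimpleGraph.mem_neighborFinset]
    refine ⟨?_, hy.1⟩
    rintro rfl
    exact hy.2 rfl
  have hvmem : v ∈ G.neighborFinset r := by rwa [SimpleGraph.mem_neighborFinset]
  have hcard : C.card < Δ := by
    have h1 : C.card ≤ N.card := Finset.card_image_le
    have h2 : N.card ≤ ((G.neighborFinset r).erase v).card := Finset.card_le_card hsub
    have h3 : ((G.neighborFinset r).erase v).card = (G.neighborFinset r).card - 1 :=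
      Finset.card_erase_of_mem hvmem
    have h4 : (G.neighborFinset r).card = G.degree r := rfl
    have h5 : G.degree r ≤ Δ := SimpleGraph.degree_le_maxDegree G r
    have h6 : 1 ≤ G.degree r := by
      rw [← h4]
      exact Finset.card_pos.mpr ⟨v, hvmem⟩
    omega
  have hns : ¬ (Finset.range Δ ⊆ C) := by
    intro hsub'
    have := Finset.card_le_card hsub'
    rw [Finset.card_range] at this
    omega
  obtain ⟨β, hβr, hβC⟩ := Finset.not_subset.mp hns
  refine ⟨β, Finset.mem_range.mp hβr, ?_⟩
  intro g hg hrg hc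
  apply hβC
  obtain ⟨y, hadj', hgeq⟩ := adj_of_mem' hg hrg
  rw [hC, Finset.mem_image]
  exact ⟨y, by rw [hN, SimpleGraph.mem_neighborFinset]; exact hadj', by rw [← hgeq, hc]⟩

lemma three_pendant {H : SimpleGraph V} [DecidableRel H.Adj]
    {r a b : V} (hab : a ≠ b) (har : a ≠ r) (hbr : b ≠ r)
    (hdeg : ∀ x, H.degree x ≤ 2)
    (hda : H.degree a ≤ 1) (hdb : H.degree b ≤ 1) (hdr : H.degree r ≤ 1)
    (hra : H.Reachable r a) (hrb : H.Reachable r b) : False := by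
  classical
  let HK : SimpleGraph V :=
    { Adj := fun x y => H.Adj x y ∧ H.Reachable r x
      symm := by
        constructor
        rintro x y ⟨hxy, hx⟩
        exact ⟨hxy.symm, hx.trans hxy.reachable⟩
      loopless := ⟨fun x h => H.irrefl h.1⟩ }
  haveI : DecidableRel HK.Adj := Classical.decRel _
  set K : Finset V := Finset.univ.filter (fun x => H.Reachable r x) with hK
  have hmemK : ∀ x, x ∈ K ↔ H.Reachable r x := by
    intro x; rw [hK, Finset.mem_filter]; simp
  have hrK : r ∈ K := (hmemK r).mpr (SimpleGraph.Reachable.refl r)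
  have haK : a ∈ K := (hmemK a).mpr hra
  have hbK : b ∈ K := (hmemK b).mpr hrb
  -- degrees
  have hKdegle : ∀ x, HK.degree x ≤ H.degree x := by
    intro x
    apply Finset.card_le_card
    intro y hy
    rw [SimpleGraph.mem_neighborFinset] at hy ⊢
    exact hy.1
  have hKdeg0 : ∀ x, x ∉ K → HK.degree x = 0 := by
    intro x hx
    rw [SimpleGraph.degree, Finset.card_eq_zero]
    ext y
    simp only [SimpleGraph.mem_neighborFinset, Finset.notMem_empty, iff_false]
    intro hy
    exact hx ((hmemK x).mpr hy.2)
  -- handshake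
  have hhs : ∑ v, HK.degree v = 2 * HK.edgeFinset.card :=
    SimpleGraph.sum_degrees_eq_twice_card_edges HK
  -- upper bound on the sum
  set T : Finset V := {r, a, b} with hT
  have hTK : T ⊆ K := by
    intro x hx
    rw [hT] at hx
    simp only [Finset.mem_insert, Finset.mem_singleton] at hx
    rcases hx with rfl | rfl | rfl
    exacts [hrK, haK, hbK]
  have hTcard : T.card = 3 := by
    rw [hT]
    rw [Finset.card_insert_of_notMem (by simp [har.symm, hbr.symm]),
      Finset.card_insert_of_notMem (by simp [hab]), Finset.card_singleton]
  have hsumT : ∑ v ∈ T, HK.degree v ≤ 3 := by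
    rw [hT]
    rw [Finset.sum_insert (by simp [har.symm, hbr.symm]),
      Finset.sum_insert (by simp [hab]), Finset.sum_singleton]
    have h1 := le_trans (hKdegle r) hdr
    have h2 := le_trans (hKdegle a) hda
    have h3 := le_trans (hKdegle b) hdb
    omega
  have hsumKT : ∑ v ∈ K \ T, HK.degree v ≤ 2 * (K \ T).card := by
    have := Finset.sum_le_card_nsmul (K \ T) (fun v => HK.degree v) 2
      (fun x _ => le_trans (hKdegle x) (hdeg x))
    simpa [smul_eq_mul, mul_comm] using this
  -- sum over univ equals sum over K
  have hsumK : ∑ v ∈ K, HK.degree v = ∑ v, HK.degree v :=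
    Finset.sum_subset (Finset.subset_univ K) (fun x _ hx => hKdeg0 x hx)
  have hsplit : ∑ v ∈ K \ T, HK.degree v + ∑ v ∈ T, HK.degree v = ∑ v ∈ K, HK.degree v :=
    Finset.sum_sdiff hTK
  have hcardKT : (K \ T).card = K.card - T.card := Finset.card_sdiff_of_subset hTK
  have hK3 : 3 ≤ K.card := hTcard ▸ Finset.card_le_card hTK
  -- lower bound: injective map from K.erase r into edges
  have hex : ∀ x, ∃ y, x ∈ K.erase r →
      H.Adj x y ∧ H.Reachable r y ∧ H.dist r y < H.dist r x := by
    intro x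
    by_cases hx : x ∈ K.erase r
    · obtain ⟨hx1, hx2⟩ := Finset.mem_erase.mp hx
      rw [hmemK] at hx2
      obtain ⟨w, hw⟩ := (hx2.symm).exists_walk_length_eq_dist
      cases w with
      | nil => exact absurd rfl hx1
      | @cons _ y _ h q =>
        refine ⟨y, fun _ => ⟨h, ⟨q.reverse⟩, ?_⟩⟩
        have h1 : H.dist r y ≤ q.length := by
          rw [SimpleGraph.dist_comm]
          exact SimpleGraph.dist_le q
        have h2 : H.dist r x = q.length + 1 := by
          rw [SimpleGraph.dist_comm, ← hw, SimpleGraph.Walk.length_cons]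
        omega
    · exact ⟨x, fun h => absurd h hx⟩
  choose f hf using hex
  have hlow : (K.erase r).card ≤ HK.edgeFinset.card := by
    apply Finset.card_le_card_of_injOn (fun x => s(x, f x))
    · intro x hx
      rw [Finset.mem_coe, SimpleGraph.mem_edgeFinset, SimpleGraph.mem_edgeSet]
      exact ⟨(hf x hx).1, (hmemK x).mp (Finset.mem_of_mem_erase hx)⟩
    · intro x1 hx1 x2 hx2 heq
      rcases Sym2.eq_iff.mp heq with ⟨h1, -⟩ | ⟨h1, h2⟩
      · exact h1
      · exfalso
        have d1 := (hf x1 hx1).2.2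
        have d2 := (hf x2 hx2).2.2
        have e1 : H.dist r x1 = H.dist r (f x2) := by rw [h1]
        have e2 : H.dist r x2 = H.dist r (f x1) := by rw [← h2]
        exact absurd ((d1.trans_eq e1).trans (d2.trans_eq e2)) (lt_irrefl _)
  have hcardEr : (K.erase r).card = K.card - 1 := Finset.card_erase_of_mem hrK
  have hfinal : 2 * (K.erase r).card ≤ ∑ v, HK.degree v := by
    rw [hhs]
    exact Nat.mul_le_mul_left 2 hlow
  omega

lemma lemB {G : SimpleGraph V} [DecidableRel G.Adj] {r : V} {p : ℕ} {s : Fin (p + 1) → V}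
    (hclass2 : chromaticIndex G = G.maxDegree + 1)
    {φ : Sym2 V → ℕ}
    (hφ : IsProperEdgeColoring (G.deleteEdges {s(r, s 0)}) φ G.maxDegree)
    (hF : IsMultifan G φ G.maxDegree r s)
    {j : Fin (p + 1)} (hj : j ≠ Fin.last p)
    {α : ℕ}
    (hαj : α ∈ missing (G.deleteEdges {s(r, s 0)}) φ G.maxDegree (s j))
    (hαp : α ∈ missing (G.deleteEdges {s(r, s 0)}) φ G.maxDegree (s (Fin.last p)))
    (helem : ∀ k : Fin (p + 1), k ≠ Fin.last p →
      α ∈ missing (G.deleteEdges {s(r, s 0)}) φ G.maxDegree (s k) → k = j) :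
    False := by
  classical
  obtain ⟨hinj, hne, hadj, hwit⟩ := id hF
  set Δ := G.maxDegree with hΔ
  set G' := G.deleteEdges {s(r, s 0)} with hG'
  obtain ⟨β, hβr⟩ := exists_missing_r (hadj 0) hφ
  have hαr : α ∉ missing G' φ Δ r := fun h => lemA' hclass2 hφ hF j h hαj
  have hβj : β ∉ missing G' φ Δ (s j) := fun h => lemA' hclass2 hφ hF j hβr h
  have hβp : β ∉ missing G' φ Δ (s (Fin.last p)) := fun h => lemA' hclass2 hφ hF _ hβr h
  have hαβ : α ≠ β := fun h => hαr (h ▸ hβr)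
  -- the Kempe subgraph
  let H : SimpleGraph V :=
    { Adj := fun x y => G'.Adj x y ∧ (φ s(x, y) = α ∨ φ s(x, y) = β)
      symm := by
        constructor
        rintro x y ⟨h1, h2⟩
        refine ⟨h1.symm, ?_⟩
        rwa [Sym2.eq_swap]
      loopless := ⟨fun x h => G'.irrefl h.1⟩ }
  haveI : DecidableRel H.Adj := Classical.decRel _
  have hHadj : ∀ {x y : V}, H.Adj x y ↔ G'.Adj x y ∧ (φ s(x, y) = α ∨ φ s(x, y) = β) :=
    Iff.rfl
  have hHsub : ∀ g ∈ H.edgeSet, g ∈ G'.edgeSet := by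
    intro g hg
    induction g using Sym2.ind with
    | _ a b => exact G'.mem_edgeSet.mpr (H.mem_edgeSet.mp hg).1
  have hHcol : ∀ g ∈ H.edgeSet, φ g = α ∨ φ g = β := by
    intro g hg
    induction g using Sym2.ind with
    | _ a b => exact (H.mem_edgeSet.mp hg).2
  have hHmem : ∀ g ∈ G'.edgeSet, (φ g = α ∨ φ g = β) → g ∈ H.edgeSet := by
    intro g hg hc
    induction g using Sym2.ind with
    | _ a b => exact H.mem_edgeSet.mpr ⟨G'.mem_edgeSet.mp hg, hc⟩
  -- color injectivity at each vertex
  have hcolinj : ∀ x : V, Set.InjOn (fun y => φ s(x, y)) ↑(H.neighborFinset x) := by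
    intro x y1 hy1 y2 hy2 heq
    rw [Finset.mem_coe, SimpleGraph.mem_neighborFinset] at hy1 hy2
    by_contra hne'
    have hedne : s(x, y1) ≠ s(x, y2) := by
      intro hh
      rcases Sym2.eq_iff.mp hh with ⟨-, h⟩ | ⟨h1, h2⟩
      · exact hne' h
      · exact H.ne_of_adj hy1 h2.symm
    exact hφ.2 _ (G'.mem_edgeSet.mpr hy1.1) _ (G'.mem_edgeSet.mpr hy2.1)
      hedne ⟨x, Sym2.mem_mk_left x y1, Sym2.mem_mk_left x y2⟩ heq
  have hdeg2 : ∀ x, H.degree x ≤ 2 := by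
    intro x
    have : (H.neighborFinset x).card ≤ ({α, β} : Finset ℕ).card := by
      apply Finset.card_le_card_of_injOn (fun y => φ s(x, y)) ?_ (hcolinj x)
      intro y hy
      rw [Finset.mem_coe, SimpleGraph.mem_neighborFinset] at hy
      rcases hy.2 with h | h <;> simp [h]
    calc H.degree x = (H.neighborFinset x).card := rfl
      _ ≤ _ := this
      _ ≤ 2 := Finset.card_insert_le _ _ |>.trans (by simp)
  have hdeg1 : ∀ (x : V) (c d : ℕ), (∀ g ∈ G'.edgeSet, x ∈ g → φ g ≠ c) →
      ((c = α ∧ d = β) ∨ (c = β ∧ d = α)) → H.degree x ≤ 1 := by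
    intro x c d hmiss hcd
    have : (H.neighborFinset x).card ≤ ({d} : Finset ℕ).card := by
      apply Finset.card_le_card_of_injOn (fun y => φ s(x, y)) ?_ (hcolinj x)
      intro y hy
      rw [Finset.mem_coe, SimpleGraph.mem_neighborFinset] at hy
      have hne' : φ s(x, y) ≠ c :=
        hmiss _ (G'.mem_edgeSet.mpr hy.1) (Sym2.mem_mk_left x y)
      rw [Finset.mem_coe, Finset.mem_singleton]
      rcases hcd with ⟨rfl, rfl⟩ | ⟨rfl, rfl⟩
      · rcases hy.2 with h | h
        · exact absurd h hne'
        · exact h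
      · rcases hy.2 with h | h
        · exact h
        · exact absurd h hne'
    simpa using this
  -- degree-one facts for the three special vertices
  have hdr1 : H.degree r ≤ 1 := hdeg1 r β α hβr.2 (Or.inr ⟨rfl, rfl⟩)
  have hdj1 : H.degree (s j) ≤ 1 := hdeg1 (s j) α β hαj.2 (Or.inl ⟨rfl, rfl⟩)
  have hdp1 : H.degree (s (Fin.last p)) ≤ 1 := hdeg1 _ α β hαp.2 (Or.inl ⟨rfl, rfl⟩)
  have hjp : s j ≠ s (Fin.last p) := fun h => hj (hinj h)
  have hnotboth : ¬ (H.Reachable r (s j) ∧ H.Reachable r (s (Fin.last p))) := by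
    rintro ⟨h1, h2⟩
    exact three_pendant hjp (hne j) (hne (Fin.last p)) hdeg2 hdj1 hdp1 hdr1 h1 h2
  -- the main swap argument, uniform in the chosen vertex
  have key : ∀ qi : Fin (p + 1), ¬ H.Reachable r (s qi) →
      α ∈ missing G' φ Δ (s qi) →
      (∀ k w : Fin (p + 1), w < k → k ≤ qi → α ∈ missing G' φ Δ (s w) →
        ¬ H.Reachable (s qi) (s w)) → False := by
    intro qi hnr hαv hwOK
    set Sw : Sym2 V → Prop := fun g => g ∈ H.edgeSet ∧ ∃ x ∈ g, H.Reachable (s qi) x with hSw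
    haveI hdec : DecidablePred Sw := fun g => Classical.dec _
    have hSwall : ∀ g, Sw g → ∀ w ∈ g, H.Reachable (s qi) w := by
      intro g hg
      obtain ⟨hgE, x, hx, hrx⟩ := hg
      induction g using Sym2.ind with
      | _ a b =>
        have hab : H.Adj a b := H.mem_edgeSet.mp hgE
        intro w hw
        rw [Sym2.mem_iff] at hx hw
        rcases hx with rfl | rfl <;> rcases hw with rfl | rfl
        · exact hrx
        · exact hrx.trans hab.reachable
        · exact hrx.trans hab.symm.reachable
        · exact hrx
    set φσ : Sym2 V → ℕ := fun g => if Sw g then (if φ g = α then β else α) else φ g with hφσ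
    have hnSw : ∀ g, ¬ Sw g → φσ g = φ g := by
      intro g hg
      simp only [hφσ]
      rw [if_neg hg]
    have hSwv : ∀ g, Sw g → (φ g = α ∧ φσ g = β) ∨ (φ g = β ∧ φσ g = α) := by
      intro g hg
      rcases hHcol g hg.1 with h | h
      · refine Or.inl ⟨h, ?_⟩
        simp only [hφσ]
        rw [if_pos hg, if_pos h]
      · refine Or.inr ⟨h, ?_⟩
        simp only [hφσ]
        rw [if_pos hg, if_neg (show φ g ≠ α from fun hh => hαβ (hh.symm.trans h))]
    have hrnot : ∀ g, r ∈ g → ¬ Sw g := by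
      intro g hrg hg
      exact hnr ((hSwall g hg r hrg).symm)
    -- properness of the swapped coloring
    have hpropsigma : IsProperEdgeColoring G' φσ Δ := by
      constructor
      · intro g hg
        by_cases h : Sw g
        · rcases hSwv g h with ⟨-, h2⟩ | ⟨-, h2⟩
          · rw [h2]; exact hβr.1
          · rw [h2]; exact hαj.1
        · rw [hnSw g h]; exact hφ.1 g hg
      · rintro f hf g hg hfg ⟨x, hxf, hxg⟩
        have hbase := hφ.2 f hf g hg hfg ⟨x, hxf, hxg⟩
        by_cases h1 : Sw f <;> by_cases h2 : Sw g
        · rcases hSwv f h1 with ⟨ha1, hb1⟩ | ⟨ha1, hb1⟩ <;>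
            rcases hSwv g h2 with ⟨ha2, hb2⟩ | ⟨ha2, hb2⟩ <;>
            rw [hb1, hb2]
          · exact absurd (ha1.trans ha2.symm) hbase
          · exact hαβ.symm
          · exact hαβ
          · exact absurd (ha1.trans ha2.symm) hbase
        · -- f swapped, g not
          have hgcol : ¬ (φ g = α ∨ φ g = β) := by
            intro hc
            apply h2
            refine ⟨hHmem g hg hc, x, hxg, ?_⟩
            exact hSwall f h1 x hxf
          rw [hnSw g h2]
          rcases hSwv f h1 with ⟨-, hb1⟩ | ⟨-, hb1⟩ <;> rw [hb1] <;>
            intro hh <;> exact hgcol (hh ▸ by simp)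
        · have hfcol : ¬ (φ f = α ∨ φ f = β) := by
            intro hc
            apply h1
            refine ⟨hHmem f hf hc, x, hxf, ?_⟩
            exact hSwall g h2 x hxg
          rw [hnSw f h1]
          rcases hSwv g h2 with ⟨-, hb2⟩ | ⟨-, hb2⟩ <;> rw [hb2] <;>
            intro hh <;> exact hfcol (hh ▸ by simp)
        · rw [hnSw f h1, hnSw g h2]; exact hbase
    -- fan condition up to qi for the swapped coloring
    have hfanσ : ∀ k : Fin (p + 1), k ≤ qi → k ≠ 0 → ∃ w, w < k ∧
        φσ s(r, s k) ∈ missing G' φσ Δ (s w) := by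
      intro k hk hk0
      obtain ⟨w, hwlt, hwm⟩ := hwit k hk0
      have heknSw : ¬ Sw s(r, s k) := hrnot _ (Sym2.mem_mk_left r (s k))
      have hek : s(r, s k) ∈ G'.edgeSet := edge_ne_e0 hinj hne hadj hk0
      have heknβ : φ s(r, s k) ≠ β := hβr.2 _ hek (Sym2.mem_mk_left r (s k))
      refine ⟨w, hwlt, ?_⟩
      rw [hnSw _ heknSw]
      refine ⟨hwm.1, ?_⟩
      intro g hg hxg
      by_cases hsw : Sw g
      · have hreach : H.Reachable (s qi) (s w) := hSwall g hsw _ hxg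
        have heknα : φ s(r, s k) ≠ α := by
          intro hh
          exact hwOK k w hwlt hk (hh ▸ hwm) hreach
        rcases hSwv g hsw with ⟨-, hb⟩ | ⟨-, hb⟩ <;> rw [hb]
        · exact fun hh => heknβ hh.symm
        · exact fun hh => heknα hh.symm
      · rw [hnSw g hsw]
        exact hwm.2 g hg hxg
    -- β missing at r under φσ
    have hβrσ : β ∈ missing G' φσ Δ r := by
      refine ⟨hβr.1, ?_⟩
      intro g hg hrg
      rw [hnSw g (hrnot g hrg)]
      exact hβr.2 g hg hrg
    -- β missing at s qi under φσ
    have hβvσ : β ∈ missing G' φσ Δ (s qi) := by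
      refine ⟨hβr.1, ?_⟩
      intro g hg hxg
      by_cases hsw : Sw g
      · rcases hSwv g hsw with ⟨ha, hb⟩ | ⟨ha, hb⟩
        · exact absurd ha (hαv.2 g hg hxg)
        · rw [hb]; exact hαβ
      · rw [hnSw g hsw]
        intro hh
        exact hsw ⟨hHmem g hg (Or.inr hh), s qi, hxg, SimpleGraph.Reachable.refl _⟩
    exact lemA hclass2 hinj hne hadj qi.val qi le_rfl φσ hpropsigma hfanσ β hβrσ hβvσ
  -- choose the vertex whose component misses r
  by_cases hrj : H.Reachable r (s j)
  · refine key (Fin.last p) (fun h => hnotboth ⟨hrj, h⟩) hαp ?_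
    intro k w hwlt hk hαw hreach
    have hwlastA : w ≠ Fin.last p := by
      intro hh
      subst hh
      rw [Fin.lt_def] at hwlt
      rw [Fin.le_def] at hk
      rw [Fin.val_last] at hwlt
      omega
    have := helem w hwlastA hαw
    subst this
    exact hnotboth ⟨hrj, hrj.trans hreach.symm⟩
  · refine key j hrj hαj ?_
    intro k w hwlt hk hαw hreach
    have hwlast : w ≠ Fin.last p := by
      intro hh
      subst hh
      rw [Fin.lt_def] at hwlt
      rw [Fin.le_def] at hk
      rw [Fin.val_last] at hwlt
      have hjv : j.val ≠ p := fun hh2 => hj (Fin.ext (by rw [hh2, Fin.val_last]))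
      have := j.isLt
      omega
    have := helem w hwlast hαw
    subst this
    exact absurd (lt_of_lt_of_le hwlt hk) (lt_irrefl _)

end Aux2

/-- If `F` is a multifan at `r` w.r.t. the critical edge `r s₀` and `φ`, then `V(F)` is
elementary: the missing color sets of distinct vertices of the fan (including `r`)
are pairwise disjoint. -/
theorem multifan_elementary {V : Type*} [Fintype V] [DecidableEq V]
    (G : SimpleGraph V) [DecidableRel G.Adj] (r : V) {p : ℕ} (s : Fin (p + 1) → V)
    (hclass2 : chromaticIndex G = G.maxDegree + 1)
    (hcrit : chromaticIndex (G.deleteEdges {s(r, s 0)}) < chromaticIndex G)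
    (φ : Sym2 V → ℕ)
    (hφ : IsProperEdgeColoring (G.deleteEdges {s(r, s 0)}) φ G.maxDegree)
    (hF : IsMultifan G φ G.maxDegree r s) :
    ({r} ∪ Set.range s : Set V).Pairwise fun u v =>
      Disjoint (missing (G.deleteEdges {s(r, s 0)}) φ G.maxDegree u)
               (missing (G.deleteEdges {s(r, s 0)}) φ G.maxDegree v) := by
  classical
  clear hcrit
  induction p with
  | zero =>
    intro u hu v hv huv
    have hmem : ∀ x ∈ ({r} ∪ Set.range s : Set V), x = r ∨ x = s 0 := by
      rintro x (hx | ⟨i, rfl⟩)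
      · exact Or.inl hx
      · exact Or.inr (by rw [Fin.fin_one_eq_zero i])
    rcases hmem u hu with rfl | rfl <;> rcases hmem v hv with rfl | rfl
    · exact absurd rfl huv
    · rw [Set.disjoint_left]
      intro γ h1 h2
      exact lemA' hclass2 hφ hF 0 h1 h2
    · rw [Set.disjoint_right]
      intro γ h1 h2
      exact lemA' hclass2 hφ hF 0 h1 h2
    · exact absurd rfl huv
  | succ p ih =>
    -- the truncated fan
    set s' : Fin (p + 1) → V := s ∘ Fin.castSucc with hs'
    obtain ⟨hinj, hne, hadj, hwit⟩ := id hF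
    have hs'0 : s' 0 = s 0 := by simp [hs']
    have he0 : s(r, s' 0) = s(r, s 0) := by rw [hs'0]
    have hφ' : IsProperEdgeColoring (G.deleteEdges {s(r, s' 0)}) φ G.maxDegree := by
      rwa [he0]
    have hF' : IsMultifan G φ G.maxDegree r s' := by
      refine ⟨hinj.comp (Fin.castSucc_injective _), fun i => hne _, fun i => hadj _, ?_⟩
      intro i hi
      have hi' : Fin.castSucc i ≠ 0 := by
        intro hh
        apply hi
        apply Fin.ext
        have := congrArg Fin.val hh
        simpa using this
      obtain ⟨w, hwlt, hwm⟩ := hwit (Fin.castSucc i) hi'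
      have hwp : w.val < p + 1 := by
        have h1 : w.val < (Fin.castSucc i).val := hwlt
        have h2 := i.isLt
        simp only [Fin.coe_castSucc] at h1
        omega
      refine ⟨⟨w.val, hwp⟩, ?_, ?_⟩
      · rw [Fin.lt_def]
        exact hwlt
      · rw [he0]
        have : s' ⟨w.val, hwp⟩ = s w := congrArg s (Fin.ext rfl)
        rw [this]
        exact hwm
    have hpre := ih s' hφ' hF'
    rw [he0] at hpre
    -- helper: r vs fan vertices
    have hrs : ∀ i : Fin (p + 2),
        Disjoint (missing (G.deleteEdges {s(r, s 0)}) φ G.maxDegree r)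
          (missing (G.deleteEdges {s(r, s 0)}) φ G.maxDegree (s i)) := by
      intro i
      rw [Set.disjoint_left]
      intro γ h1 h2
      exact lemA' hclass2 hφ hF i h1 h2
    -- prefix membership
    have hmem' : ∀ i : Fin (p + 2), i ≠ Fin.last (p + 1) →
        s i ∈ ({r} ∪ Set.range s' : Set V) := by
      intro i hi
      have hip : i.val < p + 1 := by
        have h1 := i.isLt
        have h2 : i.val ≠ p + 1 := fun hh => hi (Fin.ext (by simpa using hh))
        omega
      exact Or.inr ⟨⟨i.val, hip⟩, congrArg s (Fin.ext rfl)⟩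
    intro u hu v hv huv
    rcases hu with hu | ⟨i, rfl⟩
    · rcases hv with hv | ⟨k, rfl⟩
      · exact absurd (hu.trans (Set.mem_singleton_iff.mp hv).symm) huv
      · rw [Set.mem_singleton_iff.mp hu] at huv ⊢
        exact hrs k
    · rcases hv with hv | ⟨k, rfl⟩
      · rw [Set.mem_singleton_iff.mp hv] at huv ⊢
        exact (hrs i).symm
      · have hik : i ≠ k := fun hh => huv (by rw [hh])
        rw [Set.disjoint_left]
        intro α h1 h2
        -- elementary within the prefix, as needed by lemB
        by_cases hil : i = Fin.last (p + 1) <;> by_cases hkl : k = Fin.last (p + 1)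
        · exact hik (hil.trans hkl.symm)
        · -- i = last, k ≠ last : apply lemB with j := k
          subst hil
          have helem : ∀ m : Fin (p + 2), m ≠ Fin.last (p + 1) →
              α ∈ missing (G.deleteEdges {s(r, s 0)}) φ G.maxDegree (s m) → m = k := by
            intro m hm hαm
            by_contra hmk
            have hsd := hpre (hmem' m hm) (hmem' k hkl) (fun hh => hmk (hinj hh))
            exact Set.disjoint_left.mp hsd hαm h2
          exact lemB hclass2 hφ hF hkl h2 h1 helem
        · -- k = last, i ≠ last : apply lemB with j := i
          subst hkl
          have helem : ∀ m : Fin (p + 2), m ≠ Fin.last (p + 1) →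
              α ∈ missing (G.deleteEdges {s(r, s 0)}) φ G.maxDegree (s m) → m = i := by
            intro m hm hαm
            by_contra hmi
            have hsd := hpre (hmem' m hm) (hmem' i hil) (fun hh => hmi (hinj hh))
            exact Set.disjoint_left.mp hsd hαm h1
          exact lemB hclass2 hφ hF hil h1 h2 helem
        · -- both in the prefix
          have hsd := hpre (hmem' i hil) (hmem' k hkl) (fun hh => hik (hinj hh))
          exact Set.disjoint_left.mp hsd h1 h2
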